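/- Every affine automorphism R of C^2 that maps the hyperbola {4xy = 1} to itself and fixes the set of three points {(-ε/2, -ε^2/2) : ε^3 = 1} is one of the six linear maps (x,y) |-> (x,y), (εx, ε^2 y), (ε^2 x, ε y), (y,x), (εy, ε^2 x), (ε^2 y, ε x), where ε ranges over cube roots of unity. -/

import Mathlib

/-- An affine automorphism of `ℂ²`. -/
structure Aff where
  m11 : ℂ
  m12 : ℂ
  m21 : ℂ
  m22 : ℂ
  t1 : ℂ
  t2 : ℂ
  inv : m11 * m22 - m12 * m21 ≠ 0

/-- The underlying map of an affine automorphism. -/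
def Aff.toFun (A : Aff) (p : ℂ × ℂ) : ℂ × ℂ :=
  (A.m11 * p.1 + A.m12 * p.2 + A.t1, A.m21 * p.1 + A.m22 * p.2 + A.t2)

lemma poly5 (e0 e1 e2 e3 e4 : ℂ)
    (h : ∀ u : ℂ, u ≠ 0 → e0 + e1*u + e2*u^2 + e3*u^3 + e4*u^4 = 0) :
    e0 = 0 ∧ e1 = 0 ∧ e2 = 0 ∧ e3 = 0 ∧ e4 = 0 := by
  have H1 := h 1 one_ne_zero
  have H2 := h (-1) (by norm_num)
  have H3 := h 2 (by norm_num)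
  have H4 := h (-2) (by norm_num)
  have H5 := h 3 (by norm_num)
  refine ⟨?_, ?_, ?_, ?_, ?_⟩
  · linear_combination H1 + (1/2)*H2 + (-1/2)*H3 + (-1/10)*H4 + (1/10)*H5
  · linear_combination (2/3)*H1 + (-2/3)*H2 + (-1/12)*H3 + (1/12)*H4
  · linear_combination (-7/12)*H1 + (1/24)*H2 + (7/12)*H3 + (1/12)*H4 + (-1/8)*H5
  · linear_combination (-1/6)*H1 + (1/6)*H2 + (1/12)*H3 + (-1/12)*H4
  · linear_combination (1/12)*H1 + (-1/24)*H2 + (-1/12)*H3 + (1/60)*H4 + (1/40)*H5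

/-- Every affine automorphism of `ℂ²` preserving the hyperbola `{4xy = 1}` and the
three-point set `{(-ε/2, -ε²/2) : ε³ = 1}` is one of the six listed linear maps. -/
theorem stmt_12 (R : Aff)
    (h1 : R.toFun '' {p : ℂ × ℂ | 4 * p.1 * p.2 = 1} = {p : ℂ × ℂ | 4 * p.1 * p.2 = 1})
    (h2 : R.toFun '' {q : ℂ × ℂ | ∃ ε : ℂ, ε ^ 3 = 1 ∧ q = (-ε / 2, -ε ^ 2 / 2)}
        = {q : ℂ × ℂ | ∃ ε : ℂ, ε ^ 3 = 1 ∧ q = (-ε / 2, -ε ^ 2 / 2)}) :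
    ∃ ε : ℂ, ε ^ 3 = 1 ∧
      ((∀ p : ℂ × ℂ, R.toFun p = (ε * p.1, ε ^ 2 * p.2)) ∨
       (∀ p : ℂ × ℂ, R.toFun p = (ε * p.2, ε ^ 2 * p.1))) := by
  obtain ⟨a, b, c, d, s, t, hdet⟩ := R
  simp only [Aff.toFun] at *
  -- forward direction of h1
  have hfor : ∀ u : ℂ, u ≠ 0 →
      4 * (a * u + b * (1/(4*u)) + s) * (c * u + d * (1/(4*u)) + t) = 1 := by
    intro u hu
    have hmem : (u, 1/(4*u)) ∈ {p : ℂ × ℂ | 4 * p.1 * p.2 = 1} := by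
      simp only [Set.mem_setOf_eq]
      field_simp
    have := h1 ▸ Set.mem_image_of_mem _ hmem
    simpa [Aff.toFun] using this
  have hpoly : ∀ u : ℂ, u ≠ 0 →
      (b*d/4) + (s*d + t*b)*u + (a*d + b*c + 4*s*t - 1)*u^2
        + (4*(a*t + c*s))*u^3 + (4*(a*c))*u^4 = 0 := by
    intro u hu
    have h := hfor u hu
    field_simp at h
    linear_combination (1/4 : ℂ) * h
  obtain ⟨he0, he1, he2, he3, he4⟩ := poly5 _ _ _ _ _ hpoly
  have hac : a * c = 0 := by linear_combination (1/4 : ℂ) * he4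
  have hbd : b * d = 0 := by linear_combination (4 : ℂ) * he0
  -- image of the point (-1/2, -1/2) lies in the three-point set
  have hmem1 : ((-1/2 : ℂ), (-1/2 : ℂ)) ∈
      {q : ℂ × ℂ | ∃ ε : ℂ, ε ^ 3 = 1 ∧ q = (-ε / 2, -ε ^ 2 / 2)} := by
    exact ⟨1, by norm_num, by norm_num⟩
  have himg := h2 ▸ Set.mem_image_of_mem _ hmem1
  obtain ⟨δ, hδ3, hδeq⟩ := himg
  simp only [Aff.toFun, Prod.mk.injEq] at hδeq
  obtain ⟨hδ1, hδ2⟩ := hδeq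
  rcases mul_eq_zero.1 hac with ha | hc
  · -- a = 0 : antidiagonal case
    have hb : b ≠ 0 := by
      intro hb; apply hdet; rw [ha, hb]; ring
    have hd : d = 0 := by
      rcases mul_eq_zero.1 hbd with h | h
      · exact absurd h hb
      · exact h
    have hc : c ≠ 0 := by
      intro hc; apply hdet; rw [ha, hc]; ring
    have hs : s = 0 := by
      have : c * s = 0 := by linear_combination (1/4 : ℂ) * he3 - t * ha
      rcases mul_eq_zero.1 this with h | h
      · exact absurd h hc
      · exact h
    have ht : t = 0 := by
      have : t * b = 0 := by linear_combination he1 - s * hd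
      rcases mul_eq_zero.1 this with h | h
      · exact h
      · exact absurd h hb
    have hbδ : b = δ := by
      linear_combination (-2 : ℂ) * hδ1 - ha + 2 * hs
    have hcδ : c = δ ^ 2 := by
      linear_combination (-2 : ℂ) * hδ2 - hd + 2 * ht
    refine ⟨δ, hδ3, Or.inr fun p => ?_⟩
    rw [ha, hd, hs, ht, hbδ, hcδ]
    simp [mul_comm]
  · -- c = 0 : diagonal case
    have ha : a ≠ 0 := by
      intro ha; apply hdet; rw [ha, hc]; ring
    have hd : d ≠ 0 := by
      intro hd; apply hdet; rw [hd, hc]; ring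
    have hb : b = 0 := by
      rcases mul_eq_zero.1 hbd with h | h
      · exact h
      · exact absurd h hd
    have ht : t = 0 := by
      have : a * t = 0 := by linear_combination (1/4 : ℂ) * he3 - s * hc
      rcases mul_eq_zero.1 this with h | h
      · exact absurd h ha
      · exact h
    have hs : s = 0 := by
      have : s * d = 0 := by linear_combination he1 - t * hb
      rcases mul_eq_zero.1 this with h | h
      · exact h
      · exact absurd h hd
    have haδ : a = δ := by
      linear_combination (-2 : ℂ) * hδ1 - hb + 2 * hs
    have hdδ : d = δ ^ 2 := by
      linear_combination (-2 : ℂ) * hδ2 - hc + 2 * ht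
    refine ⟨δ, hδ3, Or.inl fun p => ?_⟩
    rw [hc, hb, hs, ht, haδ, hdδ]
    simp [mul_comm]
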